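/- For a single matrix X ∈ ℝ^{n×m} with n, m ≥ 2, any linear map T : ℝ^{n×m} → ℝ^{n×m} that is equivariant to the action (σ, τ)·X = (X_{σ⁻¹(j), τ⁻¹(k)})_{jk} of S_n × S_m is of the form T(X)_{jk} = a·Σ_{p,q} X_{pq} + b·Σ_p X_{pk} + c·Σ_q X_{jq} + d·X_{jk} for some scalars a, b, c, d. -/

import Mathlib

open Finset

lemma perm_pair_exists {n : ℕ} (j p j' p' : Fin n) (h : j = p ↔ j' = p') :
    ∃ σ : Equiv.Perm (Fin n), σ j = j' ∧ σ p = p' := by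
  by_cases hjp : j = p
  · have hjp' : j' = p' := h.mp hjp
    subst hjp; subst hjp'
    exact ⟨Equiv.swap j j', Equiv.swap_apply_left j j', Equiv.swap_apply_left j j'⟩
  · have hjp' : j' ≠ p' := fun e => hjp (h.mpr e)
    set s := Equiv.swap j j' with hs
    have h1 : s j = j' := Equiv.swap_apply_left j j'
    have h2 : s p ≠ j' := by
      rcases eq_or_ne p j' with rfl | hpj'
      · rw [hs, Equiv.swap_apply_right]
        exact hjp
      · rw [hs, Equiv.swap_apply_of_ne_of_ne (fun e => hjp e.symm) hpj']
        exact hpj'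
    refine ⟨s.trans (Equiv.swap (s p) p'), ?_, ?_⟩
    · simp only [Equiv.trans_apply, h1]
      exact Equiv.swap_apply_of_ne_of_ne (fun e => h2 e.symm) hjp'
    · simp [Equiv.trans_apply, Equiv.swap_apply_left]

/-- Any linear map `T : ℝ^{n×m} → ℝ^{n×m}` equivariant to the row-and-column
permutation action of `S_n × S_m` (for `n, m ≥ 2`) is of the form
`T(X)_{jk} = a·Σ_{p,q} X_{pq} + b·Σ_p X_{pk} + c·Σ_q X_{jq} + d·X_{jk}`. -/
theorem equivariant_linear_map_form (n m : ℕ) (hn : 2 ≤ n) (hm : 2 ≤ m)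
    (T : Matrix (Fin n) (Fin m) ℝ →ₗ[ℝ] Matrix (Fin n) (Fin m) ℝ)
    (hT : ∀ (σ : Equiv.Perm (Fin n)) (τ : Equiv.Perm (Fin m))
        (X : Matrix (Fin n) (Fin m) ℝ),
      T (fun j k => X (σ⁻¹ j) (τ⁻¹ k)) = fun j k => T X (σ⁻¹ j) (τ⁻¹ k)) :
    ∃ a b c d : ℝ, ∀ (X : Matrix (Fin n) (Fin m) ℝ) (j : Fin n) (k : Fin m),
      T X j k = a * (∑ p, ∑ q, X p q) + b * (∑ p, X p k)
        + c * (∑ q, X j q) + d * X j k := by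
  -- coefficients of T on standard basis
  set c0 : Fin n → Fin m → Fin n → Fin m → ℝ :=
    fun j k p q => T (Matrix.single p q 1) j k with hc0
  -- equivariance of the coefficients
  have hequiv : ∀ (σ : Equiv.Perm (Fin n)) (τ : Equiv.Perm (Fin m)) j k p q,
      c0 (σ j) (τ k) (σ p) (τ q) = c0 j k p q := by
    intro σ τ j k p q
    have key : (fun j' k' => Matrix.single p q (1:ℝ) (σ⁻¹ j') (τ⁻¹ k'))
        = Matrix.single (σ p) (τ q) 1 := by
      funext j' k'
      simp only [Matrix.single, Matrix.of_apply]
      congr 1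
      simp only [eq_iff_iff, and_congr_left_iff]
      constructor
      · rintro ⟨h1, h2⟩
        exact ⟨by rw [h1]; simp, by rw [h2]; simp⟩
      · rintro ⟨h1, h2⟩
        exact ⟨by rw [← h1]; simp, by rw [← h2]; simp⟩
    have := congrFun (congrFun (hT σ τ (Matrix.single p q 1)) (σ j)) (τ k)
    rw [key] at this
    simpa [hc0] using this
  -- c0 depends only on equality pattern
  have hpattern : ∀ j k p q j' k' p' q', (j = p ↔ j' = p') → (k = q ↔ k' = q') →
      c0 j k p q = c0 j' k' p' q' := by
    intro j k p q j' k' p' q' h1 h2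
    obtain ⟨σ, hσj, hσp⟩ := perm_pair_exists j p j' p' h1
    obtain ⟨τ, hτk, hτq⟩ := perm_pair_exists k q k' q' h2
    rw [← hequiv σ τ j k p q, hσj, hσp, hτk, hτq]
  -- pick witnesses
  let i0 : Fin n := ⟨0, by omega⟩
  let i1 : Fin n := ⟨1, by omega⟩
  let l0 : Fin m := ⟨0, by omega⟩
  let l1 : Fin m := ⟨1, by omega⟩
  have hi : i0 ≠ i1 := by simp [i0, i1, Fin.ext_iff]
  have hl : l0 ≠ l1 := by simp [l0, l1, Fin.ext_iff]
  set α := c0 i0 l0 i1 l1 with hα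
  set β := c0 i0 l0 i0 l1 with hβ
  set γ := c0 i0 l0 i1 l0 with hγ
  set δ := c0 i0 l0 i0 l0 with hδ
  refine ⟨α, γ - α, β - α, δ - β - γ + α, ?_⟩
  intro X j k
  -- c0 in terms of the four constants
  have hc : ∀ p q, c0 j k p q =
      α + (if q = k then γ - α else 0) + (if p = j then β - α else 0)
        + (if p = j ∧ q = k then δ - β - γ + α else 0) := by
    intro p q
    by_cases hp : p = j <;> by_cases hq : q = k
    · subst hp; subst hq
      rw [hpattern p q p q i0 l0 i0 l0 (by simp) (by simp)]
      rw [if_pos rfl, if_pos rfl, if_pos ⟨rfl, rfl⟩]; ring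
    · subst hp
      rw [hpattern p k p q i0 l0 i0 l1 (by simp)
        (iff_of_false (fun e => hq e.symm) hl)]
      rw [if_neg hq, if_pos rfl, if_neg (fun h => hq h.2)]; ring
    · subst hq
      rw [hpattern j q p q i0 l0 i1 l0
        (iff_of_false (fun e => hp e.symm) hi) (by simp)]
      rw [if_pos rfl, if_neg hp, if_neg (fun h => hp h.1)]; ring
    · rw [hpattern j k p q i0 l0 i1 l1
        (iff_of_false (fun e => hp e.symm) hi)
        (iff_of_false (fun e => hq e.symm) hl)]
      rw [if_neg hq, if_neg hp, if_neg (fun h => hp h.1)]; ring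
  -- expand T via standard basis
  have hTX : T X j k = ∑ p, ∑ q, X p q * c0 j k p q := by
    have hX : X = ∑ p, ∑ q, X p q • Matrix.single p q (1:ℝ) := by
      conv_lhs => rw [Matrix.matrix_eq_sum_single X]
      congr 1; funext p; congr 1; funext q
      rw [Matrix.smul_single, smul_eq_mul, mul_one]
    conv_lhs => rw [hX]
    rw [map_sum]
    rw [Matrix.sum_apply]
    refine Finset.sum_congr rfl fun p _ => ?_
    rw [map_sum, Matrix.sum_apply]
    refine Finset.sum_congr rfl fun q _ => ?_
    rw [map_smul]
    simp [hc0]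
  rw [hTX]
  have key : ∀ (p : Fin n) (q : Fin m), X p q * c0 j k p q =
      α * X p q + (γ - α) * (if q = k then X p q else 0)
        + (β - α) * (if p = j then X p q else 0)
        + (δ - β - γ + α) * (if p = j ∧ q = k then X p q else 0) := by
    intro p q; rw [hc]; split_ifs with h1 h2 h3 h4 h5 h6 <;> ring
  simp only [key, Finset.sum_add_distrib, ← Finset.mul_sum, ite_and]
  have s1 : ∀ p : Fin n, (∑ q, if q = k then X p q else 0) = X p k := by
    intro p; simp
  have s2 : (∑ p : Fin n, ∑ q : Fin m, if p = j then if q = k then X p q else 0 else 0)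
      = X j k := by
    simp [Finset.sum_ite_eq', s1, apply_ite (∑ q : Fin m, ·)]
  have s3 : (∑ p : Fin n, if p = j then (∑ q, X p q) else 0) = ∑ q, X j q := by
    simp
  simp only [s1, s2]
  have s4 : (∑ p : Fin n, ∑ q : Fin m, if p = j then X p q else 0) = ∑ q, X j q := by
    rw [← s3]
    refine Finset.sum_congr rfl fun p _ => ?_
    split_ifs <;> simp
  rw [s4]
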